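/- Let φ : ℝ → ℝ be a C^{1+α} periodic function (period 1) with α-Hölder seminorm of φ' bounded by M, and suppose ε, δ > 0 satisfy |φ(x) - φ(y)| < ε|x - y| whenever |x - y| > δ. Then sup|φ'| < (M/(α+1))·δ^α + ε. -/

import Mathlib

open intervalIntegral MeasureTheory Filter Topology

/-- Let phi : ℝ → ℝ be a C^{1+alpha} 1-periodic function whose derivative
has alpha-Hölder seminorm at most M, and suppose |phi(x) - phi(y)| < eps |x - y| whenever
|x - y| > delta. Then sup|phi'| < (M/(alpha+1)) delta^alpha + eps. -/
theorem deriv_sup_bound (α M ε δ : ℝ) (hα : 0 < α) (hα1 : α ≤ 1)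
    (hM : 0 < M) (hε : 0 < ε) (hδ : 0 < δ)
    (φ : ℝ → ℝ)
    (hper : ∀ x, φ (x + 1) = φ x)
    (hdiff : Differentiable ℝ φ)
    (hHolder : ∀ x y, |deriv φ x - deriv φ y| ≤ M * |x - y| ^ α)
    (hεδ : ∀ x y, |x - y| > δ → |φ x - φ y| < ε * |x - y|) :
    ∀ x, |deriv φ x| < M / (α + 1) * δ ^ α + ε := by
  intro x
  set t : ℝ := 3 * δ / 4 with ht_def
  have ht : 0 < t := by positivity
  have htδ : t < δ := by rw [ht_def]; linarith
  -- continuity of the derivative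
  have hcont : Continuous (deriv φ) := by
    rw [continuous_iff_continuousAt]
    intro y
    rw [ContinuousAt, tendsto_iff_dist_tendsto_zero]
    have hb : Tendsto (fun z => M * |z - y| ^ α) (𝓝 y) (𝓝 0) := by
      have h1 : Tendsto (fun z : ℝ => |z - y|) (𝓝 y) (𝓝 0) := by
        have := ((continuous_id.sub (continuous_const (y := y))).abs).tendsto y
        simpa using this
      have h2 : Tendsto (fun z : ℝ => M * z ^ α) (𝓝 0) (𝓝 0) := by
        have := ((continuous_const (y := M)).mul (Real.continuous_rpow_const hα.le)).tendsto 0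
        simpa [Real.zero_rpow hα.ne', Pi.mul_def] using this
      exact h2.comp h1
    refine squeeze_zero (fun z => dist_nonneg) (fun z => ?_) hb
    simpa [Real.dist_eq] using hHolder z y
  have hintf : ∀ a b : ℝ, IntervalIntegrable (deriv φ) volume a b :=
    fun a b => hcont.intervalIntegrable a b
  have hle : x - t ≤ x + t := by linarith
  -- fundamental theorem of calculus
  have hftc : ∫ s in (x - t)..(x + t), deriv φ s = φ (x + t) - φ (x - t) :=
    integral_deriv_eq_sub (fun y _ => hdiff y) (hintf _ _)
  -- the model integral
  have habs_cont : Continuous (fun s : ℝ => M * |s - x| ^ α) := by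
    exact continuous_const.mul (((continuous_id.sub continuous_const).abs).rpow_const
      (fun s => Or.inr hα.le))
  have hmodel : ∫ s in (x - t)..(x + t), M * |s - x| ^ α
      = 2 * t * (M * t ^ α / (α + 1)) := by
    rw [intervalIntegral.integral_const_mul]
    have h1 : ∫ s in (x - t)..(x + t), |s - x| ^ α = ∫ u in (-t)..t, |u| ^ α := by
      have := intervalIntegral.integral_comp_sub_right (a := x - t) (b := x + t)
        (fun u => |u| ^ α) x
      simpa using this
    have habsint : ∀ a b : ℝ, IntervalIntegrable (fun u : ℝ => |u| ^ α) volume a b :=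
      fun a b => ((continuous_abs.rpow_const (fun s => Or.inr hα.le)).intervalIntegrable a b)
    have hpos : ∫ u in (0:ℝ)..t, |u| ^ α = t ^ (α + 1) / (α + 1) := by
      have hco : ∫ u in (0:ℝ)..t, |u| ^ α = ∫ u in (0:ℝ)..t, u ^ α := by
        refine intervalIntegral.integral_congr (fun u hu => ?_)
        rw [Set.uIcc_of_le ht.le] at hu
        rw [abs_of_nonneg hu.1]
      rw [hco, integral_rpow (Or.inl (by linarith))]
      rw [Real.zero_rpow (by positivity)]
      ring
    have hneg : ∫ u in (-t)..(0:ℝ), |u| ^ α = t ^ (α + 1) / (α + 1) := by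
      have := intervalIntegral.integral_comp_neg (a := (0:ℝ)) (b := t) (fun u => |u| ^ α)
      simp only [abs_neg, neg_zero] at this
      rw [← this, hpos]
    have hsplit : ∫ u in (-t)..t, |u| ^ α
        = (∫ u in (-t)..(0:ℝ), |u| ^ α) + ∫ u in (0:ℝ)..t, |u| ^ α :=
      (intervalIntegral.integral_add_adjacent_intervals (habsint _ _) (habsint _ _)).symm
    rw [h1, hsplit, hpos, hneg]
    have htp : t ^ (α + 1) = t ^ α * t := by
      rw [Real.rpow_add ht, Real.rpow_one]
    rw [htp]
    ring
  -- difference estimate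
  have hdiffint : ∫ s in (x - t)..(x + t), (deriv φ s - deriv φ x)
      = (φ (x + t) - φ (x - t)) - 2 * t * deriv φ x := by
    rw [intervalIntegral.integral_sub (hintf _ _) intervalIntegrable_const, hftc,
      intervalIntegral.integral_const, smul_eq_mul]
    ring
  have hbound : |(φ (x + t) - φ (x - t)) - 2 * t * deriv φ x|
      ≤ 2 * t * (M * t ^ α / (α + 1)) := by
    rw [← hdiffint, ← hmodel]
    calc |∫ s in (x - t)..(x + t), (deriv φ s - deriv φ x)|
        ≤ ∫ s in (x - t)..(x + t), |deriv φ s - deriv φ x| :=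
          intervalIntegral.abs_integral_le_integral_abs hle
      _ ≤ ∫ s in (x - t)..(x + t), M * |s - x| ^ α := by
          refine intervalIntegral.integral_mono_on hle
            ((hcont.sub continuous_const).abs.intervalIntegrable _ _)
            (habs_cont.intervalIntegrable _ _) (fun s _ => hHolder s x)
  -- the separation estimate
  have hsep : |φ (x + t) - φ (x - t)| < ε * (2 * t) := by
    have h2t : |(x + t) - (x - t)| = 2 * t := by
      rw [abs_of_nonneg (by linarith)]; ring
    have := hεδ (x + t) (x - t) (by rw [h2t]; linarith)
    rwa [h2t] at this
  -- combine
  have hmain : |2 * t * deriv φ x| < 2 * t * (ε + M * t ^ α / (α + 1)) := by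
    calc |2 * t * deriv φ x|
        ≤ |φ (x + t) - φ (x - t)| + |(φ (x + t) - φ (x - t)) - 2 * t * deriv φ x| := by
          have := abs_sub_abs_le_abs_sub (2 * t * deriv φ x) (φ (x + t) - φ (x - t))
          have h2 := abs_sub_comm (2 * t * deriv φ x) (φ (x + t) - φ (x - t))
          linarith [abs_sub_abs_le_abs_sub (2 * t * deriv φ x) (φ (x + t) - φ (x - t)),
            abs_sub_comm (φ (x + t) - φ (x - t)) (2 * t * deriv φ x)]
      _ < ε * (2 * t) + 2 * t * (M * t ^ α / (α + 1)) := by linarith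
      _ = 2 * t * (ε + M * t ^ α / (α + 1)) := by ring
  have h2tpos : (0:ℝ) < 2 * t := by linarith
  have hder : |deriv φ x| < ε + M * t ^ α / (α + 1) := by
    rw [abs_mul, abs_of_pos h2tpos] at hmain
    exact lt_of_mul_lt_mul_left hmain h2tpos.le
  have hlt : M * t ^ α / (α + 1) < M / (α + 1) * δ ^ α := by
    have : t ^ α < δ ^ α := Real.rpow_lt_rpow ht.le htδ hα
    have hα1' : (0:ℝ) < α + 1 := by linarith
    rw [div_mul_eq_mul_div]
    rw [div_lt_div_iff_of_pos_right hα1']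
    exact mul_lt_mul_of_pos_left this hM
  linarith
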